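/- (The Clifford torus satisfies the Willmore equation.) Let r > 0 and R = √2 r, and define on ℝ the functions H(v) = (R + 2r cos v)/(2r(R + r cos v)), K(v) = cos v/(r(R + r cos v)), and the Laplace–Beltrami expression Δ_gH(v) = (1/(r(R + r cos v))) · d/dv[ ((R + r cos v)/r) · H'(v) ] (the Laplace–Beltrami operator of the induced metric of the torus of revolution applied to the v-dependent function H). Then for every v ∈ ℝ: Δ_gH(v) + 2 H(v) (H(v)² − K(v)) = 0. -/

import Mathlib

noncomputable section

open Real

/-- Mean curvature of the torus of revolution, as a function of `v`. -/
def Htor (r R v : ℝ) : ℝ := (R + 2 * r * Real.cos v) / (2 * r * (R + r * Real.cos v))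

/-- Gaussian curvature of the torus of revolution, as a function of `v`. -/
def Ktor (r R v : ℝ) : ℝ := Real.cos v / (r * (R + r * Real.cos v))

/-- Laplace–Beltrami operator of the induced metric of the torus of revolution,
applied to the (v-dependent) mean curvature. -/
def lapHtor (r R v : ℝ) : ℝ :=
  (1 / (r * (R + r * Real.cos v))) *
    deriv (fun w => ((R + r * Real.cos w) / r) * deriv (Htor r R) w) v

lemma den_pos (r : ℝ) (hr : 0 < r) (R : ℝ) (hR : R = Real.sqrt 2 * r) (w : ℝ) :
    0 < R + r * Real.cos w := by
  have h2 : (1:ℝ) < Real.sqrt 2 := by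
    nlinarith [Real.sq_sqrt (by norm_num : (2:ℝ) ≥ 0), Real.sqrt_nonneg 2]
  have hc := Real.neg_one_le_cos w
  nlinarith

lemma deriv_Htor (r : ℝ) (hr : 0 < r) (R : ℝ) (hR : R = Real.sqrt 2 * r) (w : ℝ) :
    deriv (Htor r R) w = -R * Real.sin w / (2 * (R + r * Real.cos w) ^ 2) := by
  have hd := den_pos r hr R hR w
  have h1 : HasDerivAt (fun w => R + 2 * r * Real.cos w) (2 * r * (-Real.sin w)) w :=
    ((Real.hasDerivAt_cos w).const_mul (2 * r)).const_add R
  have h2 : HasDerivAt (fun w => 2 * r * (R + r * Real.cos w)) (2 * r * (r * (-Real.sin w))) w :=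
    (((Real.hasDerivAt_cos w).const_mul r).const_add R).const_mul (2 * r)
  have hne : 2 * r * (R + r * Real.cos w) ≠ 0 := by positivity
  have h := (h1.div h2 hne).deriv
  rw [show ((fun v => R + 2 * r * Real.cos v) / fun v => 2 * r * (R + r * Real.cos v)) = Htor r R from rfl] at h
  rw [h]
  field_simp
  ring

/-- The Clifford torus (`R = √2 r`) satisfies the Willmore equation
`Δ_g H + 2H(H² − K) = 0`. -/
theorem clifford_torus_willmore_equation (r : ℝ) (hr : 0 < r) (R : ℝ)
    (hR : R = Real.sqrt 2 * r) (v : ℝ) :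
    lapHtor r R v + 2 * Htor r R v * (Htor r R v ^ 2 - Ktor r R v) = 0 := by
  have hRsq : R ^ 2 = 2 * r ^ 2 := by
    rw [hR, mul_pow, Real.sq_sqrt (by norm_num : (0:ℝ) ≤ 2)]
  have hfun : (fun w => ((R + r * Real.cos w) / r) * deriv (Htor r R) w)
      = fun w => -R * Real.sin w / (2 * r * (R + r * Real.cos w)) := by
    funext w
    have hd := den_pos r hr R hR w
    rw [deriv_Htor r hr R hR w]
    field_simp
  have hdv := den_pos r hr R hR v
  have h1 : HasDerivAt (fun w => -R * Real.sin w) (-R * Real.cos v) v := by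
    simpa using ((Real.hasDerivAt_sin v).const_mul (-R))
  have h2 : HasDerivAt (fun w => 2 * r * (R + r * Real.cos w)) (2 * r * (r * (-Real.sin v))) v :=
    (((Real.hasDerivAt_cos v).const_mul r).const_add R).const_mul (2 * r)
  have hne : 2 * r * (R + r * Real.cos v) ≠ 0 := by positivity
  have hD := (h1.div h2 hne).deriv
  unfold lapHtor
  rw [hfun, show (fun w => -R * Real.sin w / (2 * r * (R + r * Real.cos w))) = ((fun w => -R * Real.sin w) / fun w => 2 * r * (R + r * Real.cos w)) from rfl, hD]
  unfold Htor Ktor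
  have hs : Real.sin v ^ 2 = 1 - Real.cos v ^ 2 := by
    have := Real.sin_sq_add_cos_sq v; linarith
  field_simp
  linear_combination R * hRsq - (2*r^2*R) * hs

end
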